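/- Let H be a finite simple graph whose vertices all have degree in {3,4,5} satisfying: every 5-vertex has five 3-neighbors; every 5-vertex has at most one 3-neighbor that is a 3(B_weak)-vertex; no 4-vertex has four 3-neighbors; every 3-vertex adjacent to a 3-vertex has its other two neighbors of degree 5; every 3(D)-vertex is adjacent to three 4(B)-vertices; every 4(D)-vertex is adjacent to three 3(B_strong)-vertices and one 4(A)- or 4(B)-vertex; every 4(C_strong)-vertex is adjacent either to one 3(C)- and one 3(B_strong)-vertex or to two 3(B_strong)-vertices; and every 4(C_weak)-vertex is adjacent to at least one 4(A)- or 4(B)-vertex. Here a 3-vertex is 3(A)/3(B)/3(C)/3(D) according to having 3/2/1/0 neighbors of degree 5; a 3(B)-vertex is strong if its third neighbor has degree 4 and weak if it has degree 3; a 4-vertex is 4(A)/4(B)/4(C)/4(D) according to having 0/1/2/3 neighbors of degree 3; a 4(C)-vertex is weak if both its 3-neighbors are 3(C)-vertices, strong otherwise. Then 2|E(H)| ≥ (113/31)|V(H)|. -/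

import Mathlib

open SimpleGraph

variable {V : Type*}

/-- Two edges are at distance at most 2 (they "see" each other): distinct and
some endpoint of one equals or is adjacent to some endpoint of the other. -/
def EdgeSees (G : SimpleGraph V) (e e' : Sym2 V) : Prop :=
  e ≠ e' ∧ ∃ a ∈ e, ∃ b ∈ e', a = b ∨ G.Adj a b

/-- `G` admits a strong `N`-edge-coloring. -/
def HasStrongColoring (G : SimpleGraph V) (N : ℕ) : Prop :=
  ∃ f : G.edgeSet → Fin N, ∀ e e' : G.edgeSet, EdgeSees G e.val e'.val → f e ≠ f e'

/-- `G − v`: delete the vertex `v` (remove all edges incident to it). -/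
def DelV (G : SimpleGraph V) (v : V) : SimpleGraph V where
  Adj a b := G.Adj a b ∧ a ≠ v ∧ b ≠ v
  symm := ⟨fun _ _ h => ⟨h.1.symm, h.2.2, h.2.1⟩⟩
  loopless := ⟨fun a h => G.loopless.irrefl a h.1⟩

/-- Number of 3-neighbors. -/
noncomputable def n3 [Fintype V] (H : SimpleGraph V) [DecidableRel H.Adj] (x : V) : ℕ :=
  {y | H.Adj x y ∧ H.degree y = 3}.ncard

/-- Number of 5-neighbors. -/
noncomputable def n5 [Fintype V] (H : SimpleGraph V) [DecidableRel H.Adj] (x : V) : ℕ :=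
  {y | H.Adj x y ∧ H.degree y = 5}.ncard

/-- 3(B): 3-vertex with exactly two 5-neighbors. -/
def Is3B [Fintype V] (H : SimpleGraph V) [DecidableRel H.Adj] (x : V) : Prop :=
  H.degree x = 3 ∧ n5 H x = 2

/-- 3(B_strong): its third neighbor has degree 4. -/
def Is3BStrong [Fintype V] (H : SimpleGraph V) [DecidableRel H.Adj] (x : V) : Prop :=
  Is3B H x ∧ ∃ y, H.Adj x y ∧ H.degree y = 4

/-- 3(B_weak): its third neighbor has degree 3. -/
def Is3BWeak [Fintype V] (H : SimpleGraph V) [DecidableRel H.Adj] (x : V) : Prop :=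
  Is3B H x ∧ ∃ y, H.Adj x y ∧ H.degree y = 3

/-- 3(C): 3-vertex with exactly one 5-neighbor. -/
def Is3C [Fintype V] (H : SimpleGraph V) [DecidableRel H.Adj] (x : V) : Prop :=
  H.degree x = 3 ∧ n5 H x = 1

/-- 3(D): 3-vertex with no 5-neighbor. -/
def Is3D [Fintype V] (H : SimpleGraph V) [DecidableRel H.Adj] (x : V) : Prop :=
  H.degree x = 3 ∧ n5 H x = 0

/-- 4(A): 4-vertex with no 3-neighbor. -/
def Is4A [Fintype V] (H : SimpleGraph V) [DecidableRel H.Adj] (x : V) : Prop :=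
  H.degree x = 4 ∧ n3 H x = 0

/-- 4(B): 4-vertex with exactly one 3-neighbor. -/
def Is4B [Fintype V] (H : SimpleGraph V) [DecidableRel H.Adj] (x : V) : Prop :=
  H.degree x = 4 ∧ n3 H x = 1

/-- 4(C): 4-vertex with exactly two 3-neighbors. -/
def Is4C [Fintype V] (H : SimpleGraph V) [DecidableRel H.Adj] (x : V) : Prop :=
  H.degree x = 4 ∧ n3 H x = 2

/-- 4(D): 4-vertex with exactly three 3-neighbors. -/
def Is4D [Fintype V] (H : SimpleGraph V) [DecidableRel H.Adj] (x : V) : Prop :=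
  H.degree x = 4 ∧ n3 H x = 3

/-- 4(C_weak): both of its 3-neighbors are 3(C)-vertices. -/
def Is4CWeak [Fintype V] (H : SimpleGraph V) [DecidableRel H.Adj] (x : V) : Prop :=
  Is4C H x ∧ ∀ y, H.Adj x y → H.degree y = 3 → Is3C H y

/-- 4(C_strong): a 4(C)-vertex that is not 4(C_weak). -/
def Is4CStrong [Fintype V] (H : SimpleGraph V) [DecidableRel H.Adj] (x : V) : Prop :=
  Is4C H x ∧ ¬ Is4CWeak H x


section Discharging

open Finset

variable [Fintype V] (H : SimpleGraph V) [DecidableRel H.Adj]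

open Classical in
/-- The discharging transfer: amount of charge `x` sends to `y`. -/
noncomputable def gift (x y : V) : ℚ :=
  if H.Adj x y then
    if H.degree x = 5 ∧ H.degree y = 3 then (if Is3BWeak H y then 10/31 else 8/31)
    else if H.degree x = 4 ∧ H.degree y = 3 then
      (if Is3D H y then 20/93 else if Is3C H y then 6/31
       else if Is3BStrong H y then 4/31 else 0)
    else if (Is4A H x ∨ Is4B H x) ∧ (Is4D H y ∨ Is4CWeak H y) then 1/31 else 0
  else 0

lemma gift_nonneg (x y : V) : 0 ≤ gift H x y := by
  unfold gift; split_ifs <;> norm_num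

lemma gift_not_adj {x y : V} (h : ¬ H.Adj x y) : gift H x y = 0 := by
  unfold gift; rw [if_neg h]

lemma gift_from3 {x : V} (y : V) (hx : H.degree x = 3) : gift H x y = 0 := by
  unfold gift
  by_cases ha : H.Adj x y
  · rw [if_pos ha,
      if_neg (fun h => absurd (hx.symm.trans h.1) (by decide)),
      if_neg (fun h => absurd (hx.symm.trans h.1) (by decide)),
      if_neg (by rintro ⟨h4 | h4, -⟩ <;> exact absurd (hx.symm.trans h4.1) (by decide))]
  · rw [if_neg ha]

open Classical in
lemma gift53 {x y : V} (h : H.Adj x y) (hx : H.degree x = 5) (hy : H.degree y = 3) :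
    gift H x y = if Is3BWeak H y then 10/31 else 8/31 := by
  unfold gift; rw [if_pos h, if_pos ⟨hx, hy⟩]

open Classical in
lemma gift43 {x y : V} (h : H.Adj x y) (hx : H.degree x = 4) (hy : H.degree y = 3) :
    gift H x y = if Is3D H y then 20/93 else if Is3C H y then 6/31
      else if Is3BStrong H y then 4/31 else 0 := by
  unfold gift; rw [if_pos h, if_neg (by omega : ¬ (H.degree x = 5 ∧ H.degree y = 3)),
    if_pos ⟨hx, hy⟩]

open Classical in
lemma gift4n {x y : V} (h : H.Adj x y) (hx : H.degree x = 4) (hy : H.degree y ≠ 3) :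
    gift H x y = if (Is4A H x ∨ Is4B H x) ∧ (Is4D H y ∨ Is4CWeak H y) then 1/31 else 0 := by
  unfold gift; rw [if_pos h, if_neg (by omega : ¬ (H.degree x = 5 ∧ H.degree y = 3)),
    if_neg (by omega : ¬ (H.degree x = 4 ∧ H.degree y = 3))]

lemma ncard_adj (x : V) (P : V → Prop) [DecidablePred P] :
    {y | H.Adj x y ∧ P y}.ncard = ((H.neighborFinset x).filter P).card := by
  have : {y | H.Adj x y ∧ P y} = ↑((H.neighborFinset x).filter P) := by
    ext y; simp [SimpleGraph.mem_neighborFinset]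
  rw [this, Set.ncard_coe_finset]

lemma sum_nbr_eq (v : V) (f : V → ℚ) (hf : ∀ y, ¬ H.Adj v y → f y = 0) :
    ∑ y, f y = ∑ y ∈ H.neighborFinset v, f y :=
  (Finset.sum_subset (Finset.subset_univ _) fun y _ hy =>
    hf y (by simpa [SimpleGraph.mem_neighborFinset] using hy)).symm

lemma sum_le_ite (s : Finset V) (f : V → ℚ) (P : V → Prop) [DecidablePred P] (a b : ℚ)
    (hb : ∀ y ∈ s, f y ≤ if P y then a else b) :
    ∑ y ∈ s, f y ≤ (s.filter P).card * a + (s.filter fun y => ¬ P y).card * b := by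
  calc ∑ y ∈ s, f y ≤ ∑ y ∈ s, (if P y then a else b) := Finset.sum_le_sum hb
    _ = _ := by
      rw [Finset.sum_ite, Finset.sum_const, Finset.sum_const, nsmul_eq_mul, nsmul_eq_mul]

lemma ite_le_sum (s : Finset V) (f : V → ℚ) (P : V → Prop) [DecidablePred P] (a b : ℚ)
    (hb : ∀ y ∈ s, (if P y then a else b) ≤ f y) :
    (s.filter P).card * a + (s.filter fun y => ¬ P y).card * b ≤ ∑ y ∈ s, f y := by
  calc ((s.filter P).card : ℚ) * a + (s.filter fun y => ¬ P y).card * b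
      = ∑ y ∈ s, (if P y then a else b) := by
        rw [Finset.sum_ite, Finset.sum_const, Finset.sum_const, nsmul_eq_mul, nsmul_eq_mul]
    _ ≤ ∑ y ∈ s, f y := Finset.sum_le_sum hb

end Discharging

/-- Discharging step for Theorem 2: the structural conditions force
average degree at least 113/31. -/
theorem stmt13 [Fintype V] (H : SimpleGraph V) [DecidableRel H.Adj]
    (h1 : ∀ x, H.degree x = 3 ∨ H.degree x = 4 ∨ H.degree x = 5)
    (h2 : ∀ x y, H.degree x = 5 → H.Adj x y → H.degree y = 3)
    (h3 : ∀ x, H.degree x = 5 → {y | H.Adj x y ∧ Is3BWeak H y}.ncard ≤ 1)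
    (h4 : ¬ ∃ x, H.degree x = 4 ∧ ∀ y, H.Adj x y → H.degree y = 3)
    (h5 : ∀ x y, H.degree x = 3 → H.Adj x y → H.degree y = 3 →
        ∀ z, H.Adj x z → z ≠ y → H.degree z = 5)
    (h6 : ∀ x, Is3D H x → ∀ y, H.Adj x y → Is4B H y)
    (h7 : ∀ x, Is4D H x →
        (∀ y, H.Adj x y → H.degree y = 3 → Is3BStrong H y) ∧
        (∀ y, H.Adj x y → H.degree y = 4 → (Is4A H y ∨ Is4B H y)))
    (h8 : ∀ x, Is4CStrong H x →
        (∀ y, H.Adj x y → H.degree y = 3 → (Is3C H y ∨ Is3BStrong H y)) ∧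
        (∃ y, H.Adj x y ∧ Is3BStrong H y))
    (h9 : ∀ x, Is4CWeak H x → ∃ y, H.Adj x y ∧ (Is4A H y ∨ Is4B H y)) :
    (113 / 31 : ℚ) * Fintype.card V ≤ 2 * H.edgeSet.ncard := by
  classical
  have memN : ∀ v y : V, y ∈ H.neighborFinset v ↔ H.Adj v y := fun v y =>
    SimpleGraph.mem_neighborFinset _ _ _
  have key : ∀ v : V, (113/31 : ℚ) ≤ (H.degree v : ℚ)
      - ∑ y ∈ H.neighborFinset v, gift H v y + ∑ y ∈ H.neighborFinset v, gift H y v := by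
    intro v
    have hNc : (H.neighborFinset v).card = H.degree v := H.card_neighborFinset_eq_degree v
    have hin_nonneg : (0:ℚ) ≤ ∑ y ∈ H.neighborFinset v, gift H y v :=
      Finset.sum_nonneg fun y _ => gift_nonneg H y v
    have hout_nonneg : (0:ℚ) ≤ ∑ y ∈ H.neighborFinset v, gift H v y :=
      Finset.sum_nonneg fun y _ => gift_nonneg H v y
    have hn5 : n5 H v = ((H.neighborFinset v).filter (fun y => H.degree y = 5)).card :=
      ncard_adj H v _
    have hn3 : n3 H v = ((H.neighborFinset v).filter (fun y => H.degree y = 3)).card :=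
      ncard_adj H v _
    rcases h1 v with hv | hv | hv
    · -- ===== 3-vertex =====
      have hout0 : ∑ y ∈ H.neighborFinset v, gift H v y = 0 :=
        Finset.sum_eq_zero fun y _ => gift_from3 H y hv
      rw [hv, hout0]
      have hn5le : n5 H v ≤ 3 := by
        rw [hn5]
        calc _ ≤ (H.neighborFinset v).card := Finset.card_filter_le _ _
          _ ≤ 3 := by rw [hNc, hv]
      have htot5 := Finset.card_filter_add_card_filter_not
        (s := H.neighborFinset v) (fun y => H.degree y = 5)
      rw [hNc, hv] at htot5
      have deg3nbr : ∀ y ∈ H.neighborFinset v, H.degree y = 3 → 2 ≤ n5 H v := by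
        intro y hy h3y
        have hadj : H.Adj v y := (memN v y).mp hy
        have hsub : (H.neighborFinset v).erase y ⊆
            (H.neighborFinset v).filter (fun z => H.degree z = 5) := by
          intro z hz
          rw [Finset.mem_erase] at hz
          rw [Finset.mem_filter]
          exact ⟨hz.2, h5 v y hv hadj h3y z ((memN v z).mp hz.2) hz.1⟩
        have hcard := Finset.card_le_card hsub
        rw [Finset.card_erase_of_mem hy, hNc, hv] at hcard
        rw [hn5]; omega
      have hcases : n5 H v = 0 ∨ n5 H v = 1 ∨ n5 H v = 2 ∨ n5 H v = 3 := by omega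
      rcases hcases with hc0 | hc1 | hc2 | hc3
      · -- 3D
        have h3d : Is3D H v := ⟨hv, hc0⟩
        have hlow : ∀ y ∈ H.neighborFinset v, (20/93:ℚ) ≤ gift H y v := by
          intro y hy
          have hadj : H.Adj v y := (memN v y).mp hy
          have h4b := h6 v h3d y hadj
          rw [gift43 H hadj.symm h4b.1 hv, if_pos h3d]
        have hs := Finset.card_nsmul_le_sum (H.neighborFinset v) (fun y => gift H y v)
          (20/93 : ℚ) hlow
        rw [hNc, hv] at hs
        simp only [nsmul_eq_mul, Nat.cast_ofNat] at hs
        norm_num at hs ⊢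
        linarith
      · -- 3C
        have h3c : Is3C H v := ⟨hv, hc1⟩
        have hlow : ∀ y ∈ H.neighborFinset v,
            (if H.degree y = 5 then (8/31:ℚ) else 6/31) ≤ gift H y v := by
          intro y hy
          have hadj : H.Adj v y := (memN v y).mp hy
          rcases h1 y with h3y | h4y | h5y
          · exact absurd (deg3nbr y hy h3y) (by omega)
          · rw [if_neg (by omega), gift43 H hadj.symm h4y hv,
              if_neg (by rintro ⟨-, h0⟩; omega), if_pos h3c]
          · rw [if_pos h5y, gift53 H hadj.symm h5y hv]
            split_ifs <;> norm_num
        have hsum := ite_le_sum _ _ _ _ _ hlow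
        rw [← hn5] at hsum
        have hcn : ((H.neighborFinset v).filter fun y => ¬ H.degree y = 5).card = 2 := by
          rw [← hn5] at htot5; omega
        rw [hc1, hcn] at hsum
        norm_num at hsum ⊢
        linarith
      · -- 3B
        have h3b : Is3B H v := ⟨hv, hc2⟩
        have hcn : ((H.neighborFinset v).filter fun y => ¬ H.degree y = 5).card = 1 := by
          rw [← hn5] at htot5; omega
        obtain ⟨w, hw⟩ := Finset.card_eq_one.mp hcn
        have hwmem : w ∈ (H.neighborFinset v).filter fun y => ¬ H.degree y = 5 := by
          rw [hw]; exact Finset.mem_singleton_self w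
        rw [Finset.mem_filter] at hwmem
        have hadjw : H.Adj v w := (memN v w).mp hwmem.1
        have huniq : ∀ y ∈ H.neighborFinset v, ¬ H.degree y = 5 → y = w := by
          intro y hy hyd
          have : y ∈ (H.neighborFinset v).filter fun z => ¬ H.degree z = 5 :=
            Finset.mem_filter.mpr ⟨hy, hyd⟩
          rwa [hw, Finset.mem_singleton] at this
        rcases h1 w with hw3 | hw4 | hw5
        · -- weak
          have hweak : Is3BWeak H v := ⟨h3b, w, hadjw, hw3⟩
          have hlow : ∀ y ∈ H.neighborFinset v,
              (if H.degree y = 5 then (10/31:ℚ) else 0) ≤ gift H y v := by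
            intro y hy
            by_cases hy5 : H.degree y = 5
            · rw [if_pos hy5, gift53 H ((memN v y).mp hy).symm hy5 hv, if_pos hweak]
            · rw [if_neg hy5]; exact gift_nonneg H y v
          have hsum := ite_le_sum _ _ _ _ _ hlow
          rw [← hn5, hc2, hcn] at hsum
          norm_num at hsum ⊢
          linarith
        · -- strong
          have hstr : Is3BStrong H v := ⟨h3b, w, hadjw, hw4⟩
          have hlow : ∀ y ∈ H.neighborFinset v,
              (if H.degree y = 5 then (8/31:ℚ) else 4/31) ≤ gift H y v := by
            intro y hy
            by_cases hy5 : H.degree y = 5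
            · rw [if_pos hy5, gift53 H ((memN v y).mp hy).symm hy5 hv]
              split_ifs <;> norm_num
            · have heqw : y = w := huniq y hy hy5
              subst heqw
              rw [if_neg hy5, gift43 H hadjw.symm hw4 hv,
                if_neg (by rintro ⟨-, h0⟩; omega),
                if_neg (by rintro ⟨-, h0⟩; omega), if_pos hstr]
          have hsum := ite_le_sum _ _ _ _ _ hlow
          rw [← hn5, hc2, hcn] at hsum
          norm_num at hsum ⊢
          linarith
        · exact absurd hw5 hwmem.2
      · -- 3A
        have hlow : ∀ y ∈ H.neighborFinset v,
            (if H.degree y = 5 then (8/31:ℚ) else 0) ≤ gift H y v := by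
          intro y hy
          by_cases hy5 : H.degree y = 5
          · rw [if_pos hy5, gift53 H ((memN v y).mp hy).symm hy5 hv]
            split_ifs <;> norm_num
          · rw [if_neg hy5]; exact gift_nonneg H y v
        have hsum := ite_le_sum _ _ _ _ _ hlow
        rw [← hn5, hc3] at hsum
        norm_num at hsum ⊢
        linarith
    · -- ===== 4-vertex =====
      have hn3le4 : ((H.neighborFinset v).filter fun y => H.degree y = 3).card ≤ 4 := by
        calc _ ≤ (H.neighborFinset v).card := Finset.card_filter_le _ _
          _ ≤ 4 := by rw [hNc, hv]
      have htot3 := Finset.card_filter_add_card_filter_not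
        (s := H.neighborFinset v) (fun y => H.degree y = 3)
      rw [hNc, hv] at htot3
      have hn3le : n3 H v ≤ 3 := by
        by_contra hgt
        push_neg at hgt
        have heq : ((H.neighborFinset v).filter fun y => H.degree y = 3).card
            = (H.neighborFinset v).card := by rw [hNc, hv, ← hn3]; omega
        have hfe := Finset.eq_of_subset_of_card_le (Finset.filter_subset _ _) heq.ge
        refine h4 ⟨v, hv, fun y hy => ?_⟩
        have : y ∈ (H.neighborFinset v).filter fun y => H.degree y = 3 := by
          rw [hfe]; exact (memN v y).mpr hy
        exact (Finset.mem_filter.mp this).2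
      rw [hv]
      have hcases : n3 H v ≤ 1 ∨ n3 H v = 2 ∨ n3 H v = 3 := by omega
      rcases hcases with hc01 | hc2 | hc3
      · -- 4A or 4B
        have hup : ∀ y ∈ H.neighborFinset v,
            gift H v y ≤ if H.degree y = 3 then (20/93:ℚ) else 1/31 := by
          intro y hy
          have hadj : H.Adj v y := (memN v y).mp hy
          by_cases hy3 : H.degree y = 3
          · rw [if_pos hy3, gift43 H hadj hv hy3]
            split_ifs <;> norm_num
          · rw [if_neg hy3, gift4n H hadj hv hy3]
            split_ifs <;> norm_num
        have hsum := sum_le_ite _ _ _ _ _ hup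
        have hc3' : (((H.neighborFinset v).filter fun y => H.degree y = 3).card : ℚ) ≤ 1 := by
          rw [← hn3]; exact_mod_cast hc01
        have hcn' : (((H.neighborFinset v).filter fun y => ¬ H.degree y = 3).card : ℚ) ≤ 4 := by
          exact_mod_cast (by omega : ((H.neighborFinset v).filter fun y => ¬ H.degree y = 3).card ≤ 4)
        have hp1 : (0:ℚ) ≤ ((H.neighborFinset v).filter fun y => H.degree y = 3).card :=
          Nat.cast_nonneg _
        have hp2 : (0:ℚ) ≤ ((H.neighborFinset v).filter fun y => ¬ H.degree y = 3).card :=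
          Nat.cast_nonneg _
        norm_num at hsum ⊢
        nlinarith [hin_nonneg]
      · -- 4C
        have h4c : Is4C H v := ⟨hv, hc2⟩
        have hnAB : ¬ (Is4A H v ∨ Is4B H v) := by
          rintro (⟨-, h0⟩ | ⟨-, h0⟩) <;> omega
        by_cases hwk : Is4CWeak H v
        · -- 4C weak
          have hup : ∀ y ∈ H.neighborFinset v,
              gift H v y ≤ if H.degree y = 3 then (6/31:ℚ) else 0 := by
            intro y hy
            have hadj : H.Adj v y := (memN v y).mp hy
            by_cases hy3 : H.degree y = 3
            · have h3cy : Is3C H y := hwk.2 y hadj hy3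
              rw [if_pos hy3, gift43 H hadj hv hy3,
                if_neg (by rintro ⟨-, h0⟩; have := h3cy.2; omega), if_pos h3cy]
            · rw [if_neg hy3, gift4n H hadj hv hy3, if_neg (by rintro ⟨hab, -⟩; exact hnAB hab)]
          have hsum := sum_le_ite _ _ _ _ _ hup
          rw [← hn3, hc2] at hsum
          obtain ⟨z, hadjz, hzab⟩ := h9 v hwk
          have hz4 : H.degree z = 4 := by rcases hzab with h | h <;> exact h.1
          have hrec : (1/31:ℚ) ≤ ∑ y ∈ H.neighborFinset v, gift H y v := by
            have hzmem : z ∈ H.neighborFinset v := (memN v z).mpr hadjz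
            have hb : gift H z v ≤ ∑ y ∈ H.neighborFinset v, gift H y v :=
              Finset.single_le_sum (f := fun y => gift H y v)
                (fun y _ => gift_nonneg H y v) hzmem
            have hgz : gift H z v = 1/31 := by
              rw [gift4n H hadjz.symm hz4 (by omega), if_pos ⟨hzab, Or.inr hwk⟩]
            linarith [hgz ▸ hb]
          norm_num at hsum ⊢
          linarith
        · -- 4C strong
          have hst : Is4CStrong H v := ⟨h4c, hwk⟩
          obtain ⟨hall, z, hadjz, hz3bs⟩ := h8 v hst
          have hz3 : H.degree z = 3 := hz3bs.1.1
          have hzmem : z ∈ H.neighborFinset v := (memN v z).mpr hadjz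
          have hgz : gift H v z = 4/31 := by
            rw [gift43 H hadjz hv hz3,
              if_neg (by rintro ⟨-, h0⟩; have := hz3bs.1.2; omega),
              if_neg (by rintro ⟨-, h0⟩; have := hz3bs.1.2; omega), if_pos hz3bs]
          have hup : ∀ y ∈ (H.neighborFinset v).erase z,
              gift H v y ≤ if H.degree y = 3 then (6/31:ℚ) else 0 := by
            intro y hy
            have hymem := Finset.mem_of_mem_erase hy
            have hadj : H.Adj v y := (memN v y).mp hymem
            by_cases hy3 : H.degree y = 3
            · rcases hall y hadj hy3 with h3cy | h3by
              · rw [if_pos hy3, gift43 H hadj hv hy3,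
                  if_neg (by rintro ⟨-, h0⟩; have := h3cy.2; omega), if_pos h3cy]
              · rw [if_pos hy3, gift43 H hadj hv hy3,
                  if_neg (by rintro ⟨-, h0⟩; have := h3by.1.2; omega),
                  if_neg (by rintro ⟨-, h0⟩; have := h3by.1.2; omega), if_pos h3by]
                norm_num
            · rw [if_neg hy3, gift4n H hadj hv hy3, if_neg (by rintro ⟨hab, -⟩; exact hnAB hab)]
          have hsum := sum_le_ite _ _ _ _ _ hup
          have hcz : (((H.neighborFinset v).erase z).filter fun y => H.degree y = 3).card = 1 := by
            rw [Finset.filter_erase, Finset.card_erase_of_mem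
              (Finset.mem_filter.mpr ⟨hzmem, hz3⟩), ← hn3, hc2]
          rw [hcz] at hsum
          have hout : ∑ y ∈ H.neighborFinset v, gift H v y ≤ 10/31 := by
            rw [← Finset.add_sum_erase _ _ hzmem, hgz]
            norm_num at hsum ⊢
            linarith
          linarith
      · -- 4D
        have h4d : Is4D H v := ⟨hv, hc3⟩
        obtain ⟨H3, H4⟩ := h7 v h4d
        have hnAB : ¬ (Is4A H v ∨ Is4B H v) := by
          rintro (⟨-, h0⟩ | ⟨-, h0⟩) <;> omega
        have hup : ∀ y ∈ H.neighborFinset v,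
            gift H v y ≤ if H.degree y = 3 then (4/31:ℚ) else 0 := by
          intro y hy
          have hadj : H.Adj v y := (memN v y).mp hy
          by_cases hy3 : H.degree y = 3
          · have h3by := H3 y hadj hy3
            rw [if_pos hy3, gift43 H hadj hv hy3,
              if_neg (by rintro ⟨-, h0⟩; have := h3by.1.2; omega),
              if_neg (by rintro ⟨-, h0⟩; have := h3by.1.2; omega), if_pos h3by]
          · rw [if_neg hy3, gift4n H hadj hv hy3, if_neg (by rintro ⟨hab, -⟩; exact hnAB hab)]
        have hsum := sum_le_ite _ _ _ _ _ hup
        rw [← hn3, hc3] at hsum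
        -- the fourth neighbor
        have hcn1 : ((H.neighborFinset v).filter fun y => ¬ H.degree y = 3).card = 1 := by
          rw [← hn3] at htot3; omega
        obtain ⟨w, hw⟩ := Finset.card_eq_one.mp hcn1
        have hwmem : w ∈ (H.neighborFinset v).filter fun y => ¬ H.degree y = 3 := by
          rw [hw]; exact Finset.mem_singleton_self w
        rw [Finset.mem_filter] at hwmem
        have hadjw : H.Adj v w := (memN v w).mp hwmem.1
        have hw4 : H.degree w = 4 := by
          rcases h1 w with h | h | h
          · exact absurd h hwmem.2
          · exact h
          · exact absurd (h2 w v h hadjw.symm) (by omega)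
        have hwab : Is4A H w ∨ Is4B H w := H4 w hadjw hw4
        have hrec : (1/31:ℚ) ≤ ∑ y ∈ H.neighborFinset v, gift H y v := by
          have hb : gift H w v ≤ ∑ y ∈ H.neighborFinset v, gift H y v :=
            Finset.single_le_sum (f := fun y => gift H y v)
              (fun y _ => gift_nonneg H y v) ((memN v w).mpr hadjw)
          have hgw : gift H w v = 1/31 := by
            rw [gift4n H hadjw.symm hw4 (by omega), if_pos ⟨hwab, Or.inl h4d⟩]
          linarith [hgw ▸ hb]
        norm_num at hsum ⊢
        linarith
    · -- ===== 5-vertex =====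
      have hwc : ((H.neighborFinset v).filter fun y => Is3BWeak H y).card ≤ 1 := by
        have := h3 v hv
        rwa [ncard_adj H v (Is3BWeak H)] at this
      have hup : ∀ y ∈ H.neighborFinset v,
          gift H v y ≤ if Is3BWeak H y then (10/31:ℚ) else 8/31 := by
        intro y hy
        have hadj : H.Adj v y := (memN v y).mp hy
        rw [gift53 H hadj hv (h2 v y hv hadj)]
      have hsum := sum_le_ite _ _ _ _ _ hup
      have htotw := Finset.card_filter_add_card_filter_not
        (s := H.neighborFinset v) (fun y => Is3BWeak H y)
      rw [hNc, hv] at htotw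
      have hw' : (((H.neighborFinset v).filter fun y => Is3BWeak H y).card : ℚ) ≤ 1 := by
        exact_mod_cast hwc
      have hnw' : (((H.neighborFinset v).filter fun y => ¬ Is3BWeak H y).card : ℚ)
          = 5 - ((H.neighborFinset v).filter fun y => Is3BWeak H y).card := by
        have h5c : ((H.neighborFinset v).filter fun y => Is3BWeak H y).card ≤ 5 := by omega
        have heq : ((H.neighborFinset v).filter fun y => ¬ Is3BWeak H y).card
            = 5 - ((H.neighborFinset v).filter fun y => Is3BWeak H y).card := by omega
        rw [heq, Nat.cast_sub h5c]
        norm_num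
      rw [hv]
      norm_num at hsum ⊢
      linarith [hin_nonneg]
  -- ===== global accounting =====
  have hout : ∀ v : V, ∑ y ∈ H.neighborFinset v, gift H v y = ∑ y, gift H v y := fun v =>
    (sum_nbr_eq H v _ fun y hy => gift_not_adj H hy).symm
  have hin : ∀ v : V, ∑ y ∈ H.neighborFinset v, gift H y v = ∑ y, gift H y v := fun v =>
    (sum_nbr_eq H v _ fun y hy => gift_not_adj H fun h => hy h.symm).symm
  have hswap : ∑ v : V, ∑ y : V, gift H v y = ∑ v : V, ∑ y : V, gift H y v :=
    Finset.sum_comm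
  have main : (113/31 : ℚ) * Fintype.card V ≤ ∑ v : V, (H.degree v : ℚ) := by
    calc (113/31 : ℚ) * Fintype.card V = ∑ _v : V, (113/31 : ℚ) := by
          rw [Finset.sum_const, Finset.card_univ, nsmul_eq_mul, mul_comm]
      _ ≤ ∑ v : V, ((H.degree v : ℚ) - ∑ y ∈ H.neighborFinset v, gift H v y
            + ∑ y ∈ H.neighborFinset v, gift H y v) :=
          Finset.sum_le_sum fun v _ => key v
      _ = ∑ v : V, ((H.degree v : ℚ) - ∑ y, gift H v y + ∑ y, gift H y v) := by
          exact Finset.sum_congr rfl fun v _ => by rw [hout v, hin v]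
      _ = ∑ v : V, (H.degree v : ℚ) := by
          rw [Finset.sum_add_distrib, Finset.sum_sub_distrib, hswap]; ring
  have h2E : ∑ v : V, (H.degree v : ℚ) = 2 * H.edgeSet.ncard := by
    have hdeg := H.sum_degrees_eq_twice_card_edges
    have hn : H.edgeSet.ncard = H.edgeFinset.card := by
      simp [Set.ncard_eq_toFinset_card', SimpleGraph.edgeFinset]
    rw [hn]
    exact_mod_cast hdeg
  calc (113/31 : ℚ) * Fintype.card V ≤ ∑ v : V, (H.degree v : ℚ) := main
    _ = 2 * H.edgeSet.ncard := h2E
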